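/- If t⁰ is not a global minimizer of ψ, then the function h ↦ ψ(h t* + (1−h) t⁰) attains its minimum over [0,1] at some h* ∈ [0,1], and the point t¹ = h* t* + (1−h*) t⁰ satisfies ψ(t¹) < ψ(t⁰). -/

import Mathlib

/-- Second-order Taylor expansion of `l` at `t0`, evaluated at `t`. -/
noncomputable def taylor2 {n : ℕ} (l : (Fin n → ℝ) → ℝ) (t0 t : Fin n → ℝ) : ℝ :=
  l t0 + fderiv ℝ l t0 (t - t0)
    + (1 / 2) * fderiv ℝ (fun x => fderiv ℝ l x) t0 (t - t0) (t - t0)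

open Filter Set Topology

lemma line_hasDerivAt {n : ℕ} {l : (Fin n → ℝ) → ℝ} (hl : ContDiff ℝ 2 l)
    (t0 d : Fin n → ℝ) (s : ℝ) :
    HasDerivAt (fun s : ℝ => l (t0 + s • d)) (fderiv ℝ l (t0 + s • d) d) s := by
  have hc : HasDerivAt (fun s : ℝ => t0 + s • d) d s := by
    simpa using ((hasDerivAt_id s).smul_const d).const_add t0
  have hF : HasFDerivAt l (fderiv ℝ l (t0 + s • d)) (t0 + s • d) :=
    ((hl.differentiable (by norm_num)) (t0 + s • d)).hasFDerivAt
  exact hF.comp_hasDerivAt s hc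

lemma taylor2_line {n : ℕ} (l : (Fin n → ℝ) → ℝ) (t0 d : Fin n → ℝ) (h : ℝ) :
    taylor2 l t0 (t0 + h • d)
      = l t0 + h * fderiv ℝ l t0 d
        + h ^ 2 / 2 * fderiv ℝ (fun x => fderiv ℝ l x) t0 d d := by
  simp [taylor2, map_smul, smul_eq_mul]
  ring

lemma e_tendsto {n : ℕ} {l : (Fin n → ℝ) → ℝ} (hl : ContDiff ℝ 2 l) (t0 d : Fin n → ℝ) :
    Tendsto (fun h : ℝ => (l (t0 + h • d) - taylor2 l t0 (t0 + h • d)) / h)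
      (𝓝[>] (0:ℝ)) (𝓝 0) := by
  have hg : HasDerivAt (fun s : ℝ => l (t0 + s • d)) (fderiv ℝ l t0 d) 0 := by
    simpa using line_hasDerivAt hl t0 d 0
  have t1 := hasDerivAt_iff_tendsto_slope.mp hg
  have t2 : Tendsto (fun h : ℝ => h / 2 * fderiv ℝ (fun x => fderiv ℝ l x) t0 d d)
      (𝓝[≠] (0:ℝ)) (𝓝 0) := by
    have hcont : Continuous (fun h : ℝ => h / 2 * fderiv ℝ (fun x => fderiv ℝ l x) t0 d d) := by
      continuity
    have := hcont.tendsto 0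
    simp only [zero_div, zero_mul] at this
    exact this.mono_left nhdsWithin_le_nhds
  have key : Tendsto
      (fun h : ℝ => slope (fun s : ℝ => l (t0 + s • d)) 0 h - fderiv ℝ l t0 d
        - h / 2 * fderiv ℝ (fun x => fderiv ℝ l x) t0 d d)
      (𝓝[≠] (0:ℝ)) (𝓝 0) := by
    have := (t1.sub (tendsto_const_nhds :
        Tendsto (fun _ : ℝ => fderiv ℝ l t0 d) (𝓝[≠] (0:ℝ)) (𝓝 (fderiv ℝ l t0 d)))).sub t2
    simpa using this
  have key2 := key.mono_left (nhdsWithin_mono (0:ℝ)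
      (show Set.Ioi (0:ℝ) ⊆ {x | x ≠ 0} from fun x hx => ne_of_gt hx))
  refine key2.congr' ?_
  filter_upwards [self_mem_nhdsWithin] with h (hh : (0:ℝ) < h)
  have hne : h ≠ 0 := hh.ne'
  rw [slope_def_field, taylor2_line]
  simp only [zero_smul, add_zero]
  field_simp
  ring

lemma Bdd_nonneg {n : ℕ} {l : (Fin n → ℝ) → ℝ} (hl : ContDiff ℝ 2 l)
    (hconv : ConvexOn ℝ Set.univ l) (t0 d : Fin n → ℝ) :
    0 ≤ fderiv ℝ (fun x => fderiv ℝ l x) t0 d d := by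
  set g : ℝ → ℝ := fun s => l (t0 + s • d) with hgdef
  set gd : ℝ → ℝ := fun s => fderiv ℝ l (t0 + s • d) d with hgddef
  have hg : ∀ s, HasDerivAt g (gd s) s := fun s => line_hasDerivAt hl t0 d s
  have gconv : ConvexOn ℝ Set.univ g := by
    refine ⟨convex_univ, fun x _ y _ a b ha hb hab => ?_⟩
    have hpt : a • (t0 + x • d) + b • (t0 + y • d) = t0 + (a * x + b * y) • d := by
      have : a • (t0 + x • d) + b • (t0 + y • d)
          = (a + b) • t0 + (a * x + b * y) • d := by module
      rw [this, hab, one_smul]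
    have := hconv.2 (Set.mem_univ (t0 + x • d)) (Set.mem_univ (t0 + y • d)) ha hb hab
    rw [hpt] at this
    simpa [hgdef, smul_eq_mul] using this
  have gdmono : MonotoneOn gd Set.univ := by
    have := gconv.monotoneOn_deriv (fun x _ => (hg x).differentiableAt)
    have hderiv : ∀ s, deriv g s = gd s := fun s => (hg s).deriv
    intro x hx y hy hxy
    rw [← hderiv x, ← hderiv y]
    exact this hx hy hxy
  have hB : HasFDerivAt (fderiv ℝ l) (fderiv ℝ (fun x => fderiv ℝ l x) t0) t0 := by
    have h1 : ContDiff ℝ 1 (fderiv ℝ l) := hl.fderiv_right (by norm_num)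
    exact ((h1.differentiable one_ne_zero) t0).hasFDerivAt
  have hc : HasDerivAt (fun s : ℝ => t0 + s • d) d 0 := by
    simpa using ((hasDerivAt_id (0:ℝ)).smul_const d).const_add t0
  have hcomp : HasDerivAt (fun s : ℝ => fderiv ℝ l (t0 + s • d))
      (fderiv ℝ (fun x => fderiv ℝ l x) t0 d) 0 := by
    have hB' : HasFDerivAt (fderiv ℝ l) (fderiv ℝ (fun x => fderiv ℝ l x) t0)
        (t0 + (0:ℝ) • d) := by simpa using hB
    exact hB'.comp_hasDerivAt 0 hc
  have hgd : HasDerivAt gd (fderiv ℝ (fun x => fderiv ℝ l x) t0 d d) 0 := by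
    simpa using hcomp.clm_apply (hasDerivAt_const 0 d)
  have hsl := (hasDerivAt_iff_tendsto_slope.mp hgd).mono_left
    (nhdsWithin_mono (0:ℝ)
      (show Set.Ioi (0:ℝ) ⊆ {x | x ≠ 0} from fun x hx => ne_of_gt hx))
  refine ge_of_tendsto hsl ?_
  filter_upwards [self_mem_nhdsWithin] with h (hh : (0:ℝ) < h)
  rw [slope_def_field]
  have := gdmono (Set.mem_univ 0) (Set.mem_univ h) hh.le
  have hpos : 0 < h - 0 := by linarith
  exact div_nonneg (by linarith) hpos.le

/-- if `t⁰` is not a global minimizer of `ψ = l + P`, then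
`h ↦ ψ(h t* + (1 − h) t⁰)` attains its minimum over `[0, 1]` at some `h* ∈ [0, 1]`, and
the point `t¹ = h* t* + (1 − h*) t⁰` satisfies `ψ(t¹) < ψ(t⁰)`. -/
theorem stmt2 {n : ℕ} (l P : (Fin n → ℝ) → ℝ)
    (hl_smooth : ContDiff ℝ 2 l) (hl_conv : ConvexOn ℝ Set.univ l)
    (hP_conv : ConvexOn ℝ Set.univ P)
    (t0 tstar : Fin n → ℝ)
    (ψ : (Fin n → ℝ) → ℝ) (hψ : ∀ t, ψ t = l t + P t)
    (ψt : (Fin n → ℝ) → ℝ) (hψt : ∀ t, ψt t = taylor2 l t0 t + P t)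
    (htstar : ∀ t, ψt tstar ≤ ψt t)
    (hnotmin : ¬ ∀ t, ψ t0 ≤ ψ t) :
    ∃ hstar ∈ Set.Icc (0 : ℝ) 1,
      (∀ h ∈ Set.Icc (0 : ℝ) 1,
          ψ (hstar • tstar + (1 - hstar) • t0) ≤ ψ (h • tstar + (1 - h) • t0)) ∧
      ψ (hstar • tstar + (1 - hstar) • t0) < ψ t0 := by
  -- basic facts
  have hψfun : ψ = fun t => l t + P t := funext hψ
  have hψcont : Continuous ψ := by
    rw [hψfun]; exact (hl_smooth.continuous).add hP_conv.locallyLipschitz.continuous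
  have hψconv : ConvexOn ℝ Set.univ ψ := by
    rw [hψfun]; exact hl_conv.add hP_conv
  have hψt0 : ψt t0 = ψ t0 := by
    rw [hψt, hψ]
    simp [taylor2]
  have hline : ∀ h : ℝ, h • tstar + (1 - h) • t0 = t0 + h • (tstar - t0) := by
    intro h; module
  -- the function along the segment, and its minimizer
  set φ : ℝ → ℝ := fun h => ψ (h • tstar + (1 - h) • t0) with hφdef
  have hφcont : Continuous φ := by
    apply hψcont.comp
    continuity
  obtain ⟨hstar, hsmem, hminon⟩ := isCompact_Icc.exists_isMinOn
    (⟨0, by norm_num⟩ : (Set.Icc (0:ℝ) 1).Nonempty) hφcont.continuousOn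
  have hmin : ∀ h ∈ Set.Icc (0:ℝ) 1, φ hstar ≤ φ h := fun h hh => hminon hh
  have hφ0 : φ 0 = ψ t0 := by simp [hφdef]
  refine ⟨hstar, hsmem, hmin, ?_⟩
  -- it suffices to find one point on the segment with smaller value
  suffices hex : ∃ h ∈ Set.Icc (0:ℝ) 1, φ h < ψ t0 by
    obtain ⟨h, hh, hlt⟩ := hex
    exact lt_of_le_of_lt (hmin h hh) hlt
  by_cases hcase : ψt t0 ≤ ψt tstar
  · -- then t0 minimizes ψt, hence minimizes ψ: contradiction
    exfalso
    apply hnotmin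
    intro t
    set d : Fin n → ℝ := t - t0 with hddef
    have hE := e_tendsto hl_smooth t0 d
    have hbound : ∀ᶠ h in 𝓝[>] (0:ℝ),
        (l (t0 + h • d) - taylor2 l t0 (t0 + h • d)) / h ≤ ψ t - ψ t0 := by
      filter_upwards [Ioo_mem_nhdsGT_of_mem (by norm_num : (0:ℝ) ∈ Set.Ico 0 1)]
        with h hh
      obtain ⟨hh0, hh1⟩ := hh
      -- convexity of ψ along the segment
      have hpt : (1 - h) • t0 + h • t = t0 + h • d := by rw [hddef]; module
      have hconv := hψconv.2 (Set.mem_univ t0) (Set.mem_univ t)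
        (by linarith : (0:ℝ) ≤ 1 - h) hh0.le (by ring)
      rw [hpt] at hconv
      have h1 : ψ (t0 + h • d) - ψ t0 ≤ h * (ψ t - ψ t0) := by
        have := hconv
        simp only [smul_eq_mul] at this
        nlinarith
      -- ψt is minimized at t0
      have h2 : ψ t0 ≤ ψt (t0 + h • d) := by
        rw [← hψt0]; exact (hcase.trans (htstar (t0 + h • d)))
      have h3 : l (t0 + h • d) - taylor2 l t0 (t0 + h • d)
          = ψ (t0 + h • d) - ψt (t0 + h • d) := by
        rw [hψ, hψt]; ring
      rw [h3]
      rw [div_le_iff₀ hh0]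
      nlinarith
    have := le_of_tendsto hE hbound
    linarith
  · -- ψt tstar < ψt t0 : find a strictly better point
    push_neg at hcase
    set d : Fin n → ℝ := tstar - t0 with hddef
    set δ : ℝ := ψt t0 - ψt tstar with hδdef
    have hδpos : 0 < δ := by rw [hδdef]; linarith
    have hQ := Bdd_nonneg hl_smooth hl_conv t0 d
    have hE := e_tendsto hl_smooth t0 d
    have hev : ∀ᶠ h in 𝓝[>] (0:ℝ),
        (l (t0 + h • d) - taylor2 l t0 (t0 + h • d)) / h < δ :=
      hE.eventually (Filter.Tendsto.eventually_lt_const hδpos tendsto_id)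
    have hev2 := Ioo_mem_nhdsGT_of_mem (by norm_num : (0:ℝ) ∈ Set.Ico 0 1)
    obtain ⟨h, hlt, hh⟩ := (hev.and (eventually_mem_set.mpr hev2)).exists
    obtain ⟨hh0, hh1⟩ := hh
    refine ⟨h, ⟨hh0.le, hh1.le⟩, ?_⟩
    -- convexity of ψt along the segment from t0 to tstar
    have hTt0 : taylor2 l t0 t0 = l t0 := by simp [taylor2]
    have hTts : taylor2 l t0 tstar = l t0 + fderiv ℝ l t0 d
        + 1 / 2 * fderiv ℝ (fun x => fderiv ℝ l x) t0 d d := by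
      have : tstar = t0 + (1:ℝ) • d := by rw [hddef]; module
      rw [this, taylor2_line]
      simp
    have hPc : P (t0 + h • d) ≤ (1 - h) * P t0 + h * P tstar := by
      have hpt : (1 - h) • t0 + h • tstar = t0 + h • d := by rw [hddef]; module
      have := hP_conv.2 (Set.mem_univ t0) (Set.mem_univ tstar)
        (by linarith : (0:ℝ) ≤ 1 - h) hh0.le (by ring)
      rw [hpt] at this
      simpa [smul_eq_mul] using this
    have hψtconv : ψt (t0 + h • d) ≤ ψ t0 - h * δ := by
      rw [hψt, taylor2_line]
      have e1 : ψ t0 = ψt t0 := hψt0.symm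
      rw [e1, hδdef, hψt, hψt, hTt0, hTts]
      nlinarith [mul_nonneg (mul_nonneg hh0.le (by linarith : (0:ℝ) ≤ 1 - h)) hQ]
    have hval : φ h = ψt (t0 + h • d)
        + h * ((l (t0 + h • d) - taylor2 l t0 (t0 + h • d)) / h) := by
      rw [hφdef]
      simp only
      rw [hline, hψ, hψt, mul_div_cancel₀ _ hh0.ne']
      ring
    rw [hval]
    have hlt2 : h * ((l (t0 + h • d) - taylor2 l t0 (t0 + h • d)) / h) < h * δ :=
      (mul_lt_mul_iff_right₀ hh0).mpr hlt
    have := add_lt_add_of_le_of_lt hψtconv hlt2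
    linarith [this]
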